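/- There exists a family of piecewise linear continuous functions h_n : [0,1] → ℝ, each defined by at most polynomially many arithmetic operations from previous members (specifically h_n = min/max combinations as in the recursion f_{i+1} = min(f_i + 2^{-(i+1)}, g_i), g_{i+1} = max(f_i + 2^{-(i+1)}, g_i) starting from f_0 = 0, g_0 = 1 - t), such that h_n = f_n has at least 2^n - 1 breakpoints, i.e., points in (0,1) where the slope of h_n changes. -/

import Mathlib

noncomputable def fg : ℕ → (ℝ → ℝ) × (ℝ → ℝ)
  | 0 => (fun _ => 0, fun t => 1 - t)
  | (i+1) => (fun t => min ((fg i).1 t + ((2:ℝ)⁻¹)^(i+1)) ((fg i).2 t),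
              fun t => max ((fg i).1 t + ((2:ℝ)⁻¹)^(i+1)) ((fg i).2 t))

/-- `h` is affine on some open neighborhood of `t`. -/
def AffineOnNhd (h : ℝ → ℝ) (t : ℝ) : Prop :=
  ∃ ε > (0:ℝ), ∃ a b : ℝ, ∀ s ∈ Set.Ioo (t - ε) (t + ε), h s = a * s + b

/-- `t` is a breakpoint of `h` : a point of `(0,1)` where `h` is not locally affine. -/
def IsBreakpoint (h : ℝ → ℝ) (t : ℝ) : Prop :=
  t ∈ Set.Ioo (0:ℝ) 1 ∧ ¬ AffineOnNhd h t

set_option maxHeartbeats 1000000 in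
lemma key (n : ℕ) : ∀ j : ℕ, j < 2^n → ∀ t : ℝ, (j:ℝ) ≤ 2^n * t → 2^n * t ≤ (j:ℝ) + 1 →
    (2:ℝ)^(n+1) * (fg (n+1)).1 t
      = min ((2:ℝ)^(n+1) - ((j:ℝ)+1)) ((2:ℝ)^(n+1) + (j:ℝ) - (2:ℝ)^(n+1) * t) ∧
    (2:ℝ)^(n+1) * (fg (n+1)).2 t
      = max ((2:ℝ)^(n+1) - ((j:ℝ)+1)) ((2:ℝ)^(n+1) + (j:ℝ) - (2:ℝ)^(n+1) * t) := by
  induction n with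
  | zero =>
    intro j hj t h1 h2
    obtain rfl : j = 0 := by omega
    simp only [fg]
    rw [mul_min_of_nonneg _ _ (by norm_num), mul_max_of_nonneg _ _ (by norm_num)]
    norm_num at h1 h2 ⊢
    constructor
    · simp only [min_def]; split_ifs <;> linarith
    · simp only [max_def]; split_ifs <;> linarith
  | succ n IH =>
    intro j hj t h1 h2
    have hpos : (0:ℝ) < 2^(n+1) := by positivity
    have hone : (2:ℝ)^(n+2) * ((2:ℝ)⁻¹)^(n+2) = 1 := by
      rw [inv_pow, mul_inv_cancel₀ (by positivity)]
    have hp2 : (2:ℕ)^(n+1) = 2 * 2^n := by ring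
    rcases Nat.even_or_odd j with ⟨r, rfl⟩ | ⟨r, rfl⟩
    · have hr : r < 2^n := by omega
      have hb1 : (r:ℝ) ≤ 2^n * t := by
        push_cast at h1; simp only [pow_succ] at h1; linarith
      have hb2 : 2^n * t ≤ (r:ℝ) + 1 := by
        push_cast at h2; simp only [pow_succ] at h2; linarith
      obtain ⟨e1, e2⟩ := IH r hr t hb1 hb2
      show (2:ℝ)^(n+2) * min ((fg (n+1)).1 t + ((2:ℝ)⁻¹)^(n+2)) ((fg (n+1)).2 t) = _ ∧
           (2:ℝ)^(n+2) * max ((fg (n+1)).1 t + ((2:ℝ)⁻¹)^(n+2)) ((fg (n+1)).2 t) = _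
      rw [mul_min_of_nonneg _ _ (by positivity), mul_max_of_nonneg _ _ (by positivity)]
      have E1 : (2:ℝ)^(n+2) * ((fg (n+1)).1 t + ((2:ℝ)⁻¹)^(n+2))
          = 2 * min ((2:ℝ)^(n+1) - ((r:ℝ)+1)) ((2:ℝ)^(n+1) + (r:ℝ) - (2:ℝ)^(n+1) * t) + 1 := by
        linear_combination 2 * e1 + hone
      have E2 : (2:ℝ)^(n+2) * ((fg (n+1)).2 t)
          = 2 * max ((2:ℝ)^(n+1) - ((r:ℝ)+1)) ((2:ℝ)^(n+1) + (r:ℝ) - (2:ℝ)^(n+1) * t) := by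
        linear_combination 2 * e2
      rw [E1, E2]
      push_cast at h1 h2 ⊢
      simp only [pow_succ] at h1 h2 ⊢
      constructor <;>
      · simp only [min_def, max_def]
        split_ifs <;> linarith
    · have hr : r < 2^n := by omega
      have hb1 : (r:ℝ) ≤ 2^n * t := by
        push_cast at h1; simp only [pow_succ] at h1; linarith
      have hb2 : 2^n * t ≤ (r:ℝ) + 1 := by
        push_cast at h2; simp only [pow_succ] at h2; linarith
      obtain ⟨e1, e2⟩ := IH r hr t hb1 hb2
      show (2:ℝ)^(n+2) * min ((fg (n+1)).1 t + ((2:ℝ)⁻¹)^(n+2)) ((fg (n+1)).2 t) = _ ∧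
           (2:ℝ)^(n+2) * max ((fg (n+1)).1 t + ((2:ℝ)⁻¹)^(n+2)) ((fg (n+1)).2 t) = _
      rw [mul_min_of_nonneg _ _ (by positivity), mul_max_of_nonneg _ _ (by positivity)]
      have E1 : (2:ℝ)^(n+2) * ((fg (n+1)).1 t + ((2:ℝ)⁻¹)^(n+2))
          = 2 * min ((2:ℝ)^(n+1) - ((r:ℝ)+1)) ((2:ℝ)^(n+1) + (r:ℝ) - (2:ℝ)^(n+1) * t) + 1 := by
        linear_combination 2 * e1 + hone
      have E2 : (2:ℝ)^(n+2) * ((fg (n+1)).2 t)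
          = 2 * max ((2:ℝ)^(n+1) - ((r:ℝ)+1)) ((2:ℝ)^(n+1) + (r:ℝ) - (2:ℝ)^(n+1) * t) := by
        linear_combination 2 * e2
      rw [E1, E2]
      push_cast at h1 h2 ⊢
      simp only [pow_succ] at h1 h2 ⊢
      constructor <;>
      · simp only [min_def, max_def]
        split_ifs <;> linarith

set_option maxHeartbeats 1000000 in
lemma breakpoint (n k : ℕ) (hk1 : 1 ≤ k) (hk2 : k ≤ 2^(n+1) - 1) :
    IsBreakpoint (fg (n+1)).1 ((k:ℝ)/2^(n+1)) := by
  have hp2 : (2:ℕ)^(n+1) = 2 * 2^n := by ring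
  have hkN : k < 2^(n+1) := by have := Nat.one_le_two_pow (n := n+1); omega
  have hN : (0:ℝ) < 2^(n+1) := by positivity
  have hn : (0:ℝ) < 2^n := by positivity
  have hkR : (k:ℝ) < 2^(n+1) := by exact_mod_cast hkN
  have hk1R : (1:ℝ) ≤ (k:ℝ) := by exact_mod_cast hk1
  set t0 : ℝ := (k:ℝ)/2^(n+1) with ht0
  have eN : (2:ℝ)^(n+1) * t0 = k := by rw [ht0, mul_div_assoc']; exact mul_div_cancel_left₀ _ hN.ne'
  have en : (2:ℝ)^n * t0 = (k:ℝ)/2 := by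
    rw [ht0, pow_succ]; field_simp
  constructor
  · constructor
    · positivity
    · rw [ht0, div_lt_one hN]; exact hkR
  rintro ⟨ε, hε, a, b, hab⟩
  set δ : ℝ := min ε ((2:ℝ)^(n+1))⁻¹ / 2 with hδ
  have hδ0 : 0 < δ := by
    rw [hδ]; have : 0 < min ε ((2:ℝ)^(n+1))⁻¹ := lt_min hε (by positivity)
    linarith
  have hδε : δ < ε := by
    rw [hδ]; have := min_le_left ε ((2:ℝ)^(n+1))⁻¹; linarith
  have hδN : (2:ℝ)^(n+1) * δ ≤ 1/2 := by
    rw [hδ]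
    have h1 := min_le_right ε ((2:ℝ)^(n+1))⁻¹
    have h2 : (2:ℝ)^(n+1) * (((2:ℝ)^(n+1))⁻¹/2) = 1/2 := by field_simp
    nlinarith
  have hδn : (2:ℝ)^n * δ ≤ 1/4 := by
    rw [pow_succ] at hδN; nlinarith
  have A1 := hab (t0 - δ) ⟨by linarith, by linarith⟩
  have A2 := hab t0 ⟨by linarith, by linarith⟩
  have A3 := hab (t0 + δ) ⟨by linarith, by linarith⟩
  have hNδ : 0 < (2:ℝ)^(n+1) * δ := by positivity
  rcases Nat.even_or_odd k with ⟨m, rfl⟩ | ⟨m, rfl⟩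
  · -- k = m + m, even; m ≥ 1
    obtain ⟨m, rfl⟩ : ∃ m', m = m' + 1 := ⟨m - 1, by omega⟩
    have hm1 : m + 1 < 2^n := by omega
    have hm : m < 2^n := by omega
    have emid : (2:ℝ)^n * t0 = (m:ℝ) + 1 := by
      rw [en]; push_cast; ring
    have K1 := key n m hm (t0 - δ)
      (by have : (2:ℝ)^n * (t0 - δ) = ((m:ℝ)+1) - 2^n*δ := by rw [mul_sub, emid]
          rw [this]; push_cast; linarith)
      (by have : (2:ℝ)^n * (t0 - δ) = ((m:ℝ)+1) - 2^n*δ := by rw [mul_sub, emid]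
          rw [this]; push_cast; nlinarith [mul_pos hn hδ0])
    have K2 := key n (m+1) hm1 t0 (by rw [emid]; push_cast; linarith)
      (by rw [emid]; push_cast; linarith)
    have K3 := key n (m+1) hm1 (t0 + δ)
      (by have : (2:ℝ)^n * (t0 + δ) = ((m:ℝ)+1) + 2^n*δ := by rw [mul_add, emid]
          rw [this]; push_cast; nlinarith [mul_pos hn hδ0])
      (by have : (2:ℝ)^n * (t0 + δ) = ((m:ℝ)+1) + 2^n*δ := by rw [mul_add, emid]
          rw [this]; push_cast; linarith)
    have E1 : (2:ℝ)^(n+1) * (fg (n+1)).1 (t0 - δ)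
        = 2^(n+1) - ((m:ℝ)+2) + 2^(n+1)*δ := by
      rw [K1.1, min_eq_right]
      · push_cast; have : (2:ℝ)^(n+1)*(t0-δ) = 2^(n+1)*t0 - 2^(n+1)*δ := by ring
        rw [this, eN]; push_cast; ring
      · have : (2:ℝ)^(n+1)*(t0-δ) = 2^(n+1)*t0 - 2^(n+1)*δ := by ring
        rw [this, eN]; push_cast; linarith
    have E2 : (2:ℝ)^(n+1) * (fg (n+1)).1 t0 = 2^(n+1) - ((m:ℝ)+2) := by
      rw [K2.1, min_eq_left]
      · push_cast; ring
      · rw [eN]; push_cast; linarith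
    have E3 : (2:ℝ)^(n+1) * (fg (n+1)).1 (t0 + δ) = 2^(n+1) - ((m:ℝ)+2) := by
      rw [K3.1, min_eq_left]
      · push_cast; ring
      · have : (2:ℝ)^(n+1)*(t0+δ) = 2^(n+1)*t0 + 2^(n+1)*δ := by ring
        rw [this, eN]; push_cast; linarith
    rw [A1] at E1; rw [A2] at E2; rw [A3] at E3
    nlinarith [E1, E2, E3]
  · -- k = 2m+1, odd
    have hm : m < 2^n := by omega
    have emid : (2:ℝ)^n * t0 = (m:ℝ) + 1/2 := by
      rw [en]; push_cast; ring
    have K1 := key n m hm (t0 - δ)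
      (by have : (2:ℝ)^n * (t0 - δ) = ((m:ℝ)+1/2) - 2^n*δ := by rw [mul_sub, emid]
          rw [this]; linarith)
      (by have : (2:ℝ)^n * (t0 - δ) = ((m:ℝ)+1/2) - 2^n*δ := by rw [mul_sub, emid]
          rw [this]; nlinarith [mul_pos hn hδ0])
    have K2 := key n m hm t0 (by rw [emid]; linarith) (by rw [emid]; linarith)
    have K3 := key n m hm (t0 + δ)
      (by have : (2:ℝ)^n * (t0 + δ) = ((m:ℝ)+1/2) + 2^n*δ := by rw [mul_add, emid]
          rw [this]; nlinarith [mul_pos hn hδ0])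
      (by have : (2:ℝ)^n * (t0 + δ) = ((m:ℝ)+1/2) + 2^n*δ := by rw [mul_add, emid]
          rw [this]; linarith)
    have E1 : (2:ℝ)^(n+1) * (fg (n+1)).1 (t0 - δ) = 2^(n+1) - ((m:ℝ)+1) := by
      rw [K1.1, min_eq_left]
      have : (2:ℝ)^(n+1)*(t0-δ) = 2^(n+1)*t0 - 2^(n+1)*δ := by ring
      rw [this, eN]; push_cast; linarith
    have E2 : (2:ℝ)^(n+1) * (fg (n+1)).1 t0 = 2^(n+1) - ((m:ℝ)+1) := by
      rw [K2.1, min_eq_left]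
      rw [eN]; push_cast; linarith
    have E3 : (2:ℝ)^(n+1) * (fg (n+1)).1 (t0 + δ)
        = 2^(n+1) - ((m:ℝ)+1) - 2^(n+1)*δ := by
      rw [K3.1, min_eq_right]
      · have : (2:ℝ)^(n+1)*(t0+δ) = 2^(n+1)*t0 + 2^(n+1)*δ := by ring
        rw [this, eN]; push_cast; ring
      · have : (2:ℝ)^(n+1)*(t0+δ) = 2^(n+1)*t0 + 2^(n+1)*δ := by ring
        rw [this, eN]; push_cast; linarith
    rw [A1] at E1; rw [A2] at E2; rw [A3] at E3
    nlinarith [E1, E2, E3]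

theorem stmt3 :
    ∃ h : ℕ → ℝ → ℝ, (∀ n, h n = (fg n).1) ∧
      ∀ n, ∃ B : Finset ℝ,
        (∀ t ∈ B, IsBreakpoint (h n) t) ∧ 2^n - 1 ≤ B.card := by
  refine ⟨fun n => (fg n).1, fun n => rfl, fun n => ?_⟩
  refine ⟨(Finset.Icc 1 (2^n - 1)).image (fun k : ℕ => (k:ℝ)/2^n), ?_, ?_⟩
  · intro t ht
    simp only [Finset.mem_image, Finset.mem_Icc] at ht
    obtain ⟨k, ⟨hk1, hk2⟩, rfl⟩ := ht
    cases n with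
    | zero => simp at hk2; omega
    | succ m => exact breakpoint m k hk1 hk2
  · rw [Finset.card_image_of_injOn, Nat.card_Icc]
    · omega
    · intro x _ y _ hxy
      have hne : ((2:ℝ)^n) ≠ 0 := by positivity
      field_simp at hxy
      exact_mod_cast hxy
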